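/- Let x_0 < x_1 < ... be the successive local maximum points (in increasing order) of an i.i.d. sequence with continuous distribution function, conditioned on 0 being a local maximum point, and let τ_k denote the distance between consecutive alternating extrema starting from 0 (τ_1 = distance from 0 to the next local minimum point, τ_2 = distance from that minimum to the next local maximum point, etc.). Then E[τ_1] = 3/2. -/

import Mathlib

open MeasureTheory ProbabilityTheory Set Function Topology Filter
open scoped ENNReal

section Aux

lemma aux_atomless_of_cont_cdf {μ : Measure ℝ} [IsProbabilityMeasure μ]
    (hcont : Continuous (cdf μ)) (x : ℝ) : μ {x} = 0 := by
  rw [← measure_cdf μ, StieltjesFunction.measure_singleton]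
  have hb : (𝓝[<] x).NeBot := inferInstance
  have h1 : leftLim (cdf μ) x = cdf μ x :=
    leftLim_eq_of_tendsto
      ((hcont.tendsto x).mono_left nhdsWithin_le_nhds)
  simp [h1]

variable {Ω : Type*} [MeasurableSpace Ω] {P : Measure Ω} [IsProbabilityMeasure P]
  {X : ℤ → Ω → ℝ}

lemma aux_ties_null (hmeas : ∀ i, Measurable (X i))
    (hindep : iIndepFun X P)
    (hident : ∀ i j : ℤ, IdentDistrib (X i) (X j) P P)
    (hcont : Continuous (cdf (P.map (X 0)))) {i j : ℤ} (hij : i ≠ j) :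
    P {ω | X i ω = X j ω} = 0 := by
  have hIP : IsProbabilityMeasure (P.map (X 0)) :=
    Measure.isProbabilityMeasure_map (hmeas 0).aemeasurable
  have hind : IndepFun (X i) (X j) P := hindep.indepFun hij
  have hmap : P.map (fun ω => (X i ω, X j ω)) = (P.map (X i)).prod (P.map (X j)) :=
    (indepFun_iff_map_prod_eq_prod_map_map (hmeas i).aemeasurable (hmeas j).aemeasurable).mp hind
  have hXi : P.map (X i) = P.map (X 0) := (hident i 0).map_eq
  have hXj : P.map (X j) = P.map (X 0) := (hident j 0).map_eq
  have hdiag : MeasurableSet {p : ℝ × ℝ | p.1 = p.2} :=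
    measurableSet_eq_fun measurable_fst measurable_snd
  have key : P {ω | X i ω = X j ω} = (P.map (fun ω => (X i ω, X j ω))) {p : ℝ × ℝ | p.1 = p.2} := by
    rw [Measure.map_apply ((hmeas i).prodMk (hmeas j)) hdiag]; rfl
  rw [key, hmap, hXi, hXj, Measure.prod_apply hdiag]
  have h0 : ∀ x : ℝ, (P.map (X 0)) (Prod.mk x ⁻¹' {p : ℝ × ℝ | p.1 = p.2}) = 0 := by
    intro x
    have hx : Prod.mk x ⁻¹' {p : ℝ × ℝ | p.1 = p.2} = {x} := by ext y; simp [eq_comm]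
    rw [hx]; exact aux_atomless_of_cont_cdf hcont x
  simp only [h0, lintegral_zero]

lemma aux_measurableSet_strictMono {m : ℕ} :
    MeasurableSet {f : Fin m → ℝ | StrictMono f} := by
  have h : {f : Fin m → ℝ | StrictMono f} =
      ⋂ (p : Fin m × Fin m) (_ : p.1 < p.2), {f : Fin m → ℝ | f p.1 < f p.2} := by
    ext f
    simp only [Set.mem_setOf_eq, Set.mem_iInter]
    exact ⟨fun hf p hp => hf hp, fun h a b hab => h (a, b) hab⟩
  rw [h]
  exact MeasurableSet.iInter fun p => MeasurableSet.iInter fun _ =>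
    measurableSet_lt (measurable_pi_apply _) (measurable_pi_apply _)

lemma aux_joint_pi (hmeas : ∀ i, Measurable (X i))
    (hindep : iIndepFun X P)
    (hident : ∀ i j : ℤ, IdentDistrib (X i) (X j) P P)
    {m : ℕ} (ι : Fin m → ℤ) (hι : Function.Injective ι) :
    P.map (fun ω (j : Fin m) => X (ι j) ω) = Measure.pi (fun _ => P.map (X 0)) := by
  have hIP : IsProbabilityMeasure (P.map (X 0)) :=
    Measure.isProbabilityMeasure_map (hmeas 0).aemeasurable
  refine Eq.symm <| Measure.pi_eq (μ := fun _ : Fin m => P.map (X 0))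
    (μ' := P.map (fun ω (j : Fin m) => X (ι j) ω)) (fun s hs => ?_)
  have hmeasTuple : Measurable (fun ω (j : Fin m) => X (ι j) ω) :=
    measurable_pi_iff.mpr (fun j => hmeas (ι j))
  rw [Measure.map_apply hmeasTuple (MeasurableSet.univ_pi hs)]
  classical
  set sets : ℤ → Set ℝ := Function.extend ι s (fun _ => Set.univ) with hsets
  have hsets_apply : ∀ j, sets (ι j) = s j := fun j => hι.extend_apply _ _ _
  have hpre : (fun ω (j : Fin m) => X (ι j) ω) ⁻¹' (Set.pi Set.univ s)
      = ⋂ i ∈ Finset.image ι Finset.univ, X i ⁻¹' sets i := by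
    ext ω
    simp only [Set.mem_preimage, Set.mem_pi, Set.mem_univ, forall_true_left, Set.mem_iInter,
      Finset.mem_image, Finset.mem_univ, true_and]
    constructor
    · rintro h i ⟨j, rfl⟩
      rw [hsets_apply]; exact h j
    · intro h j
      have := h (ι j) ⟨j, rfl⟩
      rwa [hsets_apply] at this
  rw [hpre, hindep.measure_inter_preimage_eq_mul (Finset.image ι Finset.univ)
    (fun i hi => ?_)]
  · rw [Finset.prod_image (fun a _ b _ h => hι h)]
    refine Finset.prod_congr rfl (fun j _ => ?_)
    rw [hsets_apply, ← Measure.map_apply (hmeas (ι j)) (hs j), (hident (ι j) 0).map_eq]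
  · simp only [Finset.mem_image, Finset.mem_univ, true_and] at hi
    obtain ⟨j, rfl⟩ := hi
    rw [hsets_apply]; exact hs j

lemma aux_chain_prob (hmeas : ∀ i, Measurable (X i))
    (hindep : iIndepFun X P)
    (hident : ∀ i j : ℤ, IdentDistrib (X i) (X j) P P)
    (hcont : Continuous (cdf (P.map (X 0))))
    {m : ℕ} (ι : Fin m → ℤ) (hι : Function.Injective ι) :
    P {ω | StrictMono fun j => X (ι j) ω} = ((m.factorial : ℝ≥0∞))⁻¹ := by
  classical
  set ν : Measure (Fin m → ℝ) := Measure.pi (fun _ => P.map (X 0)) with hν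
  set c : ℝ≥0∞ := ν {f | StrictMono f} with hc
  have key : ∀ (κ : Fin m → ℤ), Function.Injective κ →
      P {ω | StrictMono fun j => X (κ j) ω} = c := by
    intro κ hκ
    have hmt : Measurable (fun ω (j : Fin m) => X (κ j) ω) :=
      measurable_pi_iff.mpr (fun j => hmeas (κ j))
    have h1 : {ω | StrictMono fun j => X (κ j) ω}
        = (fun ω (j : Fin m) => X (κ j) ω) ⁻¹' {f | StrictMono f} := rfl
    rw [h1, ← Measure.map_apply hmt aux_measurableSet_strictMono,
      aux_joint_pi hmeas hindep hident κ hκ]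
  set B : Equiv.Perm (Fin m) → Set Ω := fun σ => {ω | StrictMono fun j => X (ι (σ j)) ω} with hB
  have hBc : ∀ σ, P (B σ) = c := fun σ => key (ι ∘ σ) (hι.comp σ.injective)
  have hBmeas : ∀ σ, MeasurableSet (B σ) := by
    intro σ
    have hmt : Measurable (fun ω (j : Fin m) => X (ι (σ j)) ω) :=
      measurable_pi_iff.mpr (fun j => hmeas _)
    exact hmt aux_measurableSet_strictMono
  have hInj : ∀ {ω} {σ : Equiv.Perm (Fin m)}, ω ∈ B σ →
      Function.Injective (fun j => X (ι j) ω) := by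
    intro ω σ hσ
    have h1 : Function.Injective ((fun j => X (ι j) ω) ∘ σ) := hσ.injective
    have h2 : Function.Injective (((fun j => X (ι j) ω) ∘ σ) ∘ σ.symm) :=
      h1.comp σ.symm.injective
    have h3 : (((fun j => X (ι j) ω) ∘ σ) ∘ σ.symm) = fun j => X (ι j) ω := by
      funext j; simp [Function.comp]
    rwa [h3] at h2
  have hdisj : PairwiseDisjoint (↑(Finset.univ : Finset (Equiv.Perm (Fin m)))) B := by
    intro σ _ τ _ hστ
    refine Set.disjoint_left.mpr (fun ω hσω hτω => hστ ?_)
    set g : Fin m → ℝ := fun j => X (ι j) ω with hg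
    have hmono := Tuple.unique_monotone (f := g) (hσω : StrictMono (g ∘ σ)).monotone
      (hτω : StrictMono (g ∘ τ)).monotone
    have hginj : Function.Injective g := hInj hσω
    ext j
    exact congrArg Fin.val (hginj (congrFun hmono j))
  have hunion : P (⋃ σ : Equiv.Perm (Fin m), B σ) = 1 := by
    rw [← prob_compl_eq_zero_iff (MeasurableSet.iUnion hBmeas)]
    have hsub : (⋃ σ : Equiv.Perm (Fin m), B σ)ᶜ ⊆
        ⋃ (p : Fin m × Fin m) (_ : p.1 ≠ p.2), {ω | X (ι p.1) ω = X (ι p.2) ω} := by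
      intro ω hω
      by_contra hcon
      simp only [Set.mem_iUnion, not_exists, Set.mem_setOf_eq] at hcon
      set g : Fin m → ℝ := fun j => X (ι j) ω with hg
      have hginj : Function.Injective g := by
        intro a b hab
        by_contra hne
        exact hcon (a, b) hne hab
      have hmono : Monotone (g ∘ Tuple.sort g) := Tuple.monotone_sort g
      have hsm : StrictMono (g ∘ Tuple.sort g) :=
        hmono.strictMono_of_injective (hginj.comp (Tuple.sort g).injective)
      exact hω (Set.mem_iUnion.mpr ⟨Tuple.sort g, hsm⟩)
    refine measure_mono_null hsub (measure_iUnion_null fun p => measure_iUnion_null fun hp =>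
      aux_ties_null hmeas hindep hident hcont (fun h => hp (hι h)))
  have hsum : (Fintype.card (Equiv.Perm (Fin m)) : ℝ≥0∞) * c = 1 := by
    have h1 : (⋃ σ : Equiv.Perm (Fin m), B σ)
        = ⋃ σ ∈ (Finset.univ : Finset (Equiv.Perm (Fin m))), B σ := by simp
    rw [h1] at hunion
    rw [← hunion, measure_biUnion_finset hdisj (fun σ _ => hBmeas σ)]
    simp [hBc, Finset.card_univ, mul_comm]
  rw [Fintype.card_perm, Fintype.card_fin] at hsum
  have hne0 : ((m.factorial : ℝ≥0∞)) ≠ 0 := by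
    simp [Nat.factorial_ne_zero]
  have hnetop : ((m.factorial : ℝ≥0∞)) ≠ ⊤ := ENNReal.natCast_ne_top _
  have hfin : P {ω | StrictMono fun j => X (ι j) ω} = c := key ι hι
  rw [hfin, ← one_mul c, ← ENNReal.inv_mul_cancel hne0 hnetop, mul_assoc, hsum, mul_one]

lemma aux_chain_set_prob (hmeas : ∀ i, Measurable (X i))
    (hindep : iIndepFun X P)
    (hident : ∀ i j : ℤ, IdentDistrib (X i) (X j) P P)
    (hcont : Continuous (cdf (P.map (X 0))))
    (a : ℤ) (m : ℕ) :
    P {ω | ∀ k : ℕ, k < m → X (a + k + 1) ω < X (a + k) ω}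
      = (((m+1).factorial : ℝ≥0∞))⁻¹ := by
  set ι : Fin (m+1) → ℤ := fun j => a + m - j.val with hι
  have hinj : Function.Injective ι := by
    intro j j' h
    have hj := j.isLt; have hj' := j'.isLt
    have : (j.val : ℤ) = j'.val := by simp only [hι] at h; omega
    exact Fin.ext (by exact_mod_cast this)
  have hset : {ω | ∀ k : ℕ, k < m → X (a + k + 1) ω < X (a + k) ω}
      = {ω | StrictMono fun j => X (ι j) ω} := by
    ext ω
    simp only [Set.mem_setOf_eq]
    rw [Fin.strictMono_iff_lt_succ]
    constructor
    · intro h i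
      have hi := i.isLt
      have e1 : ι i.castSucc = a + (m - 1 - i.val : ℕ) + 1 := by
        simp only [hι, Fin.coe_castSucc]; omega
      have e2 : ι i.succ = a + (m - 1 - i.val : ℕ) := by
        simp only [hι, Fin.val_succ]; omega
      rw [e1, e2]
      exact h _ (by omega)
    · intro h k hk
      set i : Fin m := ⟨m - 1 - k, by omega⟩ with hi
      have hh := h i
      have e1 : ι i.castSucc = a + k + 1 := by
        simp only [hι, Fin.coe_castSucc, hi]; omega
      have e2 : ι i.succ = a + k := by
        simp only [hι, Fin.val_succ, hi]; omega
      rwa [e1, e2] at hh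
  rw [hset, aux_chain_prob hmeas hindep hident hcont ι hinj]

lemma aux_lintegral_nat {α : Type*} [MeasurableSpace α] (Q : Measure α)
    (f : α → ℕ) (hf : Measurable f) :
    ∫⁻ ω, (f ω : ℝ≥0∞) ∂Q = ∑' n : ℕ, Q {ω | n < f ω} := by
  have hms : ∀ n : ℕ, MeasurableSet {ω | n < f ω} := fun n => hf (by trivial)
  have hpt : ∀ ω, (f ω : ℝ≥0∞)
      = ∑' n : ℕ, Set.indicator {ω | n < f ω} (fun _ => (1:ℝ≥0∞)) ω := by
    intro ω
    have h1 : ∀ n : ℕ, Set.indicator {ω | n < f ω} (fun _ => (1:ℝ≥0∞)) ω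
        = if n < f ω then 1 else 0 := by
      intro n; by_cases h : n < f ω <;> simp [Set.indicator, h]
    rw [tsum_congr h1, tsum_eq_sum (s := Finset.range (f ω))
      (fun n hn => by simp [Finset.mem_range, Nat.not_lt] at hn; simp [Nat.not_lt.mpr hn])]
    rw [Finset.sum_congr rfl (fun n hn => if_pos (Finset.mem_range.mp hn))]
    simp
  rw [lintegral_congr hpt, lintegral_tsum
    (fun n => (measurable_const.indicator (hms n)).aemeasurable)]
  refine tsum_congr fun n => ?_
  rw [lintegral_indicator (hms n), setLIntegral_one]

end Aux

/-- The first-local-minimum predicate. -/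
def locMinAt {Ω : Type*} (X : ℤ → Ω → ℝ) (n : ℕ) (ω : Ω) : Prop :=
  1 ≤ n ∧ X n ω < X ((n : ℤ) - 1) ω ∧ X n ω < X ((n : ℤ) + 1) ω

/-- Conditioned on `0` being a local maximum point of an i.i.d. sequence with continuous
distribution function, the expected position `τ₁` of the first subsequent local minimum
point equals `3/2`. -/
theorem expected_first_local_min_eq_three_halves
    {Ω : Type*} [MeasurableSpace Ω] (P : Measure Ω) [IsProbabilityMeasure P]
    (X : ℤ → Ω → ℝ) (hmeas : ∀ i, Measurable (X i))
    (hindep : iIndepFun X P)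
    (hident : ∀ i j : ℤ, IdentDistrib (X i) (X j) P P)
    (hcont : Continuous (cdf (P.map (X 0))))
    (τ : Ω → ℕ)
    (hτ : ∀ ω, τ ω = sInf {n : ℕ | 1 ≤ n ∧
      X n ω < X ((n : ℤ) - 1) ω ∧ X n ω < X ((n : ℤ) + 1) ω}) :
    ∫ ω, (τ ω : ℝ)
      ∂(ProbabilityTheory.cond P {ω | X (-1) ω < X 0 ω ∧ X 1 ω < X 0 ω}) = 3 / 2 := by
  classical
  have hτ' : ∀ ω, τ ω = sInf {n : ℕ | locMinAt X n ω} := hτ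
  set A : Set Ω := {ω | X (-1) ω < X 0 ω ∧ X 1 ω < X 0 ω} with hA
  have hAmeas : MeasurableSet A :=
    (measurableSet_lt (hmeas (-1)) (hmeas 0)).inter (measurableSet_lt (hmeas 1) (hmeas 0))
  -- descending-run events
  set D : ℕ → Set Ω := fun n => {ω | ∀ k : ℕ, k < n → X ((k:ℤ) + 1) ω < X ((k:ℤ)) ω} with hD
  set C : ℕ → Set Ω :=
    fun n => {ω | ∀ k : ℕ, k < n + 1 → X ((-1:ℤ) + k + 1) ω < X ((-1:ℤ) + k) ω} with hC
  set E : ℕ → Set Ω := fun n => {ω | X (-1) ω < X 0 ω} ∩ D n with hE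
  have hPD : ∀ n : ℕ, P (D n) = (((n+1).factorial : ℝ≥0∞))⁻¹ := by
    intro n
    have h := aux_chain_set_prob hmeas hindep hident hcont 0 n
    simp only [zero_add] at h
    exact h
  have hPC : ∀ n : ℕ, P (C n) = (((n+2).factorial : ℝ≥0∞))⁻¹ := by
    intro n
    exact aux_chain_set_prob hmeas hindep hident hcont (-1) (n+1)
  have hCD : ∀ n : ℕ, C n = {ω | X 0 ω < X (-1) ω} ∩ D n := by
    intro n
    ext ω
    simp only [hC, hD, Set.mem_setOf_eq, Set.mem_inter_iff]
    constructor
    · intro h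
      refine ⟨?_, ?_⟩
      · have h0 := h 0 (by omega)
        norm_num at h0
        exact h0
      · intro k hk
        have hk1 := h (k+1) (by omega)
        have e1 : ((-1 : ℤ) + ((k+1 : ℕ) : ℤ) + 1) = (k : ℤ) + 1 := by push_cast; ring
        have e2 : ((-1 : ℤ) + ((k+1 : ℕ) : ℤ)) = (k : ℤ) := by push_cast; ring
        rw [e1, e2] at hk1
        exact hk1
    · rintro ⟨h0, hDn⟩ k hk
      cases k with
      | zero => norm_num; exact h0
      | succ k =>
        have e1 : ((-1 : ℤ) + ((k+1 : ℕ) : ℤ) + 1) = (k : ℤ) + 1 := by push_cast; ring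
        have e2 : ((-1 : ℤ) + ((k+1 : ℕ) : ℤ)) = (k : ℤ) := by push_cast; ring
        rw [e1, e2]
        exact hDn k (by omega)
  have hDmeas : ∀ n, MeasurableSet (D n) := by
    intro n
    have h : D n = ⋂ (k : ℕ), ⋂ (_ : k < n), {ω | X ((k:ℤ) + 1) ω < X ((k:ℤ)) ω} := by
      ext ω; simp only [hD, Set.mem_setOf_eq, Set.mem_iInter]
    rw [h]
    exact MeasurableSet.iInter fun k => MeasurableSet.iInter fun _ =>
      measurableSet_lt (hmeas _) (hmeas _)
  have hCmeas : ∀ n, MeasurableSet (C n) := by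
    intro n
    have h : C n = ⋂ (k : ℕ), ⋂ (_ : k < n + 1),
        {ω | X ((-1:ℤ) + k + 1) ω < X ((-1:ℤ) + k) ω} := by
      ext ω; simp only [hC, Set.mem_setOf_eq, Set.mem_iInter]
    rw [h]
    exact MeasurableSet.iInter fun k => MeasurableSet.iInter fun _ =>
      measurableSet_lt (hmeas _) (hmeas _)
  -- a.e.-disjoint decomposition  D = E ⊔ C
  have hEC : ∀ n : ℕ, P (E n) + P (C n) = P (D n) := by
    intro n
    have hdisj : Disjoint (E n) (C n) := by
      rw [hCD n]
      refine Set.disjoint_left.mpr ?_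
      rintro ω ⟨h1, _⟩ ⟨h2, _⟩
      simp only [Set.mem_setOf_eq] at h1 h2
      exact absurd h1 (not_lt.mpr h2.le)
    have hsubE : E n ⊆ D n := Set.inter_subset_right
    have hsubC : C n ⊆ D n := by rw [hCD n]; exact Set.inter_subset_right
    have hdiffnull : P (D n \ (E n ∪ C n)) = 0 := by
      refine measure_mono_null ?_
        (aux_ties_null hmeas hindep hident hcont (show (-1 : ℤ) ≠ 0 by norm_num))
      rintro ω ⟨hDn, hnot⟩
      simp only [Set.mem_union] at hnot
      push_neg at hnot
      obtain ⟨hnE, hnC⟩ := hnot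
      have h1 : ¬ X (-1) ω < X 0 ω := fun h => hnE ⟨h, hDn⟩
      have h2 : ¬ X 0 ω < X (-1) ω := fun h => hnC (by rw [hCD n]; exact ⟨h, hDn⟩)
      exact le_antisymm (not_lt.mp h2) (not_lt.mp h1)
    have hDeq : P (D n) = P (E n ∪ C n) := by
      refine le_antisymm ?_ (measure_mono (Set.union_subset hsubE hsubC))
      calc P (D n) ≤ P ((E n ∪ C n) ∪ (D n \ (E n ∪ C n))) := by
            refine measure_mono (fun ω hω => ?_)
            by_cases h : ω ∈ E n ∪ C n
            · exact Or.inl h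
            · exact Or.inr ⟨hω, h⟩
        _ ≤ P (E n ∪ C n) + P (D n \ (E n ∪ C n)) := measure_union_le _ _
        _ = P (E n ∪ C n) := by rw [hdiffnull, add_zero]
    rw [hDeq, measure_union hdisj (hCmeas n)]
  have hPE : ∀ n : ℕ, P (E n) + (((n+2).factorial : ℝ≥0∞))⁻¹
      = (((n+1).factorial : ℝ≥0∞))⁻¹ := by
    intro n; rw [← hPC n, ← hPD n]; exact hEC n
  -- P A = 1/3
  have hAE1 : A = E 1 := by
    ext ω
    simp only [hA, hE, hD, Set.mem_setOf_eq, Set.mem_inter_iff]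
    constructor
    · rintro ⟨h1, h2⟩
      refine ⟨h1, fun k hk => ?_⟩
      have : k = 0 := by omega
      subst this
      simpa using h2
    · rintro ⟨h1, h2⟩
      have := h2 0 (by omega)
      simp only [Nat.cast_zero, zero_add] at this
      exact ⟨h1, this⟩
  have hPA : P A = (3 : ℝ≥0∞)⁻¹ := by
    have h := hPE 1
    norm_num [Nat.factorial] at h
    have harith : (3 : ℝ≥0∞)⁻¹ + (6 : ℝ≥0∞)⁻¹ = (2 : ℝ≥0∞)⁻¹ := by
      rw [← ENNReal.toReal_eq_toReal_iff' (by finiteness) (by finiteness),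
        ENNReal.toReal_add (by finiteness) (by finiteness)]
      simp [ENNReal.toReal_inv]
      norm_num
    rw [hAE1]
    exact (ENNReal.add_left_inj (by finiteness)).mp (h.trans harith.symm)
  -- ties null set
  set Z : Set Ω := ⋃ (p : ℤ × ℤ), {ω | p.1 ≠ p.2 ∧ X p.1 ω = X p.2 ω} with hZ
  have hZnull : P Z = 0 := by
    refine measure_iUnion_null fun p => ?_
    by_cases h : p.1 = p.2
    · have he : {ω | p.1 ≠ p.2 ∧ X p.1 ω = X p.2 ω} = (∅ : Set Ω) := by
        ext ω; simp [h]
      simp [he]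
    · exact measure_mono_null (fun ω hω => hω.2)
        (aux_ties_null hmeas hindep hident hcont h)
  have hZmem : ∀ {ω}, ω ∉ Z → ∀ {i j : ℤ}, i ≠ j → X i ω ≠ X j ω := by
    intro ω hω i j hij heq
    exact hω (Set.mem_iUnion.mpr ⟨(i, j), hij, heq⟩)
  -- the event that there is no local minimum at all (within A)
  set W : Set Ω := A ∩ ⋂ (n : ℕ), {ω | ¬ locMinAt X n ω} with hW
  -- descending run lemma
  have hdesc : ∀ ω, ω ∈ A → ω ∉ Z → ∀ (k : ℕ),
      (∀ j : ℕ, 1 ≤ j → j ≤ k → ¬ locMinAt X j ω) →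
      ∀ k' : ℕ, k' ≤ k → X ((k':ℤ) + 1) ω < X ((k':ℤ)) ω := by
    intro ω hωA hωZ k hnp k'
    induction k' with
    | zero => intro _; simpa using hωA.2
    | succ k' ih =>
      intro hle
      have h1 : X ((k':ℤ) + 1) ω < X ((k':ℤ)) ω := ih (by omega)
      have hnp' := hnp (k'+1) (by omega) (by omega)
      unfold locMinAt at hnp'
      push_neg at hnp'
      have e1 : (((k'+1 : ℕ)) : ℤ) = (k' : ℤ) + 1 := by push_cast; ring
      rw [e1] at hnp'
      have e2 : ((k' : ℤ) + 1 - 1) = (k' : ℤ) := by ring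
      rw [e2] at hnp'
      have h3 := hnp' (by omega) h1
      have hne : X ((k':ℤ) + 1 + 1) ω ≠ X ((k':ℤ) + 1) ω := hZmem hωZ (by omega)
      have hlt : X ((k':ℤ) + 1 + 1) ω < X ((k':ℤ) + 1) ω := h3.lt_of_ne hne
      rw [show (((k'+1 : ℕ)) : ℤ) = (k' : ℤ) + 1 from e1]
      exact hlt
  have htend : Tendsto (fun n : ℕ => (((n+2).factorial : ℝ≥0∞))⁻¹) atTop (𝓝 0) := by
    refine tendsto_of_tendsto_of_tendsto_of_le_of_le tendsto_const_nhds
      ENNReal.tendsto_inv_nat_nhds_zero (fun n => zero_le) (fun n => ?_)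
    rw [ENNReal.inv_le_inv]
    exact_mod_cast Nat.cast_le.mpr
      (le_trans (Nat.le_add_right n 2) (Nat.self_le_factorial _))
  have hWnull : P W = 0 := by
    have hsub : ∀ n : ℕ, W \ Z ⊆ D n := by
      intro n ω hω
      obtain ⟨⟨hωA, hωI⟩, hωZ⟩ := hω
      intro k hk
      refine hdesc ω hωA hωZ n (fun j _ _ => Set.mem_iInter.mp hωI j) k (by omega)
    have hle : ∀ n : ℕ, P W ≤ (((n+2).factorial : ℝ≥0∞))⁻¹ := by
      intro n
      calc P W = P (W \ Z) := (measure_diff_null hZnull).symm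
        _ ≤ P (D (n+1)) := measure_mono (hsub (n+1))
        _ = (((n+2).factorial : ℝ≥0∞))⁻¹ := hPD (n+1)
    exact le_antisymm (ge_of_tendsto' htend hle) zero_le
  -- the key identification
  have hZW : P (Z ∪ W) = 0 := measure_union_null hZnull hWnull
  have hkey : ∀ n : ℕ, P (A ∩ {ω | n < τ ω}) = P (E (n+1)) := by
    intro n
    have hsub1 : (A ∩ {ω | n < τ ω}) \ (Z ∪ W) ⊆ E (n+1) := by
      rintro ω ⟨⟨hωA, hτn⟩, hωZW⟩
      have hωZ : ω ∉ Z := fun h => hωZW (Or.inl h)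
      refine ⟨hωA.1, fun k hk => ?_⟩
      refine hdesc ω hωA hωZ n (fun j hj1 hjn hploc => ?_) k (by omega)
      have hsle : sInf {m : ℕ | locMinAt X m ω} ≤ j :=
        Nat.sInf_le (show j ∈ {m : ℕ | locMinAt X m ω} from hploc)
      rw [← hτ' ω] at hsle
      simp only [Set.mem_setOf_eq] at hτn
      omega
    have hsub2 : E (n+1) \ (Z ∪ W) ⊆ A ∩ {ω | n < τ ω} := by
      rintro ω ⟨⟨hω1, hωD⟩, hωZW⟩
      have hωW : ω ∉ W := fun h => hωZW (Or.inr h)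
      have hX10 : X 1 ω < X 0 ω := by
        have := hωD 0 (by omega)
        simpa using this
      have hωA : ω ∈ A := ⟨hω1, hX10⟩
      refine ⟨hωA, ?_⟩
      have hSne : ∃ m, locMinAt X m ω := by
        by_contra hcon
        push_neg at hcon
        exact hωW ⟨hωA, Set.mem_iInter.mpr fun m => hcon m⟩
      obtain ⟨m, hm⟩ := hSne
      have hτmem : locMinAt X (τ ω) ω := by
        rw [hτ' ω]
        exact Nat.sInf_mem ⟨m, show m ∈ {m : ℕ | locMinAt X m ω} from hm⟩
      show n < τ ω
      by_contra hcon
      push_neg at hcon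
      obtain ⟨h1τ, h2τ, h3τ⟩ := hτmem
      have hch := hωD (τ ω) (by omega)
      exact absurd h3τ (not_lt.mpr hch.le)
    refine le_antisymm ?_ ?_
    · calc P (A ∩ {ω | n < τ ω}) = P ((A ∩ {ω | n < τ ω}) \ (Z ∪ W)) :=
            (measure_diff_null hZW).symm
        _ ≤ P (E (n+1)) := measure_mono hsub1
    · calc P (E (n+1)) = P (E (n+1) \ (Z ∪ W)) := (measure_diff_null hZW).symm
        _ ≤ P (A ∩ {ω | n < τ ω}) := measure_mono hsub2
  -- measurability of τ
  have hτmeas : Measurable τ := by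
    have hploc : ∀ n : ℕ, MeasurableSet {ω | locMinAt X n ω} := fun n =>
      (MeasurableSet.const _).inter ((measurableSet_lt (hmeas _) (hmeas _)).inter
        (measurableSet_lt (hmeas _) (hmeas _)))
    apply measurable_to_countable'
    intro k
    have hset : τ ⁻¹' {k} =
        ({ω | locMinAt X k ω} ∩ ⋂ (j : ℕ), ⋂ (_ : j < k), {ω | ¬ locMinAt X j ω})
        ∪ ((⋂ (j : ℕ), {ω | ¬ locMinAt X j ω}) ∩ {ω | k = 0}) := by
      ext ω
      simp only [Set.mem_preimage, Set.mem_singleton_iff, Set.mem_union, Set.mem_inter_iff,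
        Set.mem_iInter, Set.mem_setOf_eq]
      rw [hτ' ω]
      constructor
      · intro hk
        by_cases hne : ∃ m, locMinAt X m ω
        · left
          have hmem : locMinAt X (sInf {m | locMinAt X m ω}) ω := Nat.sInf_mem hne
          rw [hk] at hmem
          refine ⟨hmem, fun j hj hploc' => ?_⟩
          have hsle := Nat.sInf_le (show j ∈ {m : ℕ | locMinAt X m ω} from hploc')
          rw [hk] at hsle
          omega
        · right
          push_neg at hne
          refine ⟨hne, ?_⟩
          rw [← hk, show {m | locMinAt X m ω} = ∅ from
            Set.eq_empty_iff_forall_notMem.mpr hne, Nat.sInf_empty]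
      · rintro (⟨hpk, hmin⟩ | ⟨hemp, hk0⟩)
        · refine le_antisymm (Nat.sInf_le (show k ∈ {m : ℕ | locMinAt X m ω} from hpk)) ?_
          by_contra hlt
          push_neg at hlt
          have hmem := Nat.sInf_mem ⟨k, show k ∈ {m : ℕ | locMinAt X m ω} from hpk⟩
          exact hmin _ hlt hmem
        · rw [show {m | locMinAt X m ω} = ∅ from
            Set.eq_empty_iff_forall_notMem.mpr hemp, Nat.sInf_empty]
          omega
    rw [hset]
    exact ((hploc k).inter (MeasurableSet.iInter fun j => MeasurableSet.iInter fun _ =>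
      (hploc j).compl)).union ((MeasurableSet.iInter fun j => (hploc j).compl).inter
      (MeasurableSet.const _))
  -- the tsum
  have htsum : ∑' n : ℕ, P (E (n+1)) = (2 : ℝ≥0∞)⁻¹ := by
    have hpart : ∀ N : ℕ, (∑ n ∈ Finset.range N, P (E (n+1)))
        + (((N+2).factorial : ℝ≥0∞))⁻¹ = (2 : ℝ≥0∞)⁻¹ := by
      intro N
      induction N with
      | zero => norm_num [Nat.factorial]
      | succ N ih =>
        rw [Finset.sum_range_succ]
        have h := hPE (N+1)
        rw [show N+1+2 = N+3 from by omega, show N+1+1 = N+2 from by omega] at h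
        rw [show N+1+2 = N+3 from by omega, add_assoc, h]
        exact ih
    have hfacne : ∀ N : ℕ, (((N+2).factorial : ℝ≥0∞))⁻¹ ≠ ∞ :=
      fun N => ENNReal.inv_ne_top.mpr (by exact_mod_cast (Nat.factorial_ne_zero _))
    have hterm : ∀ N, (∑ n ∈ Finset.range N, P (E (n+1)))
        = (2 : ℝ≥0∞)⁻¹ - (((N+2).factorial : ℝ≥0∞))⁻¹ :=
      fun N => ENNReal.eq_sub_of_add_eq (hfacne N) (hpart N)
    have hinf : (⨅ N : ℕ, (((N+2).factorial : ℝ≥0∞))⁻¹) = 0 :=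
      le_antisymm (ge_of_tendsto' htend (fun N => iInf_le _ N)) zero_le
    rw [ENNReal.tsum_eq_iSup_nat, iSup_congr hterm, ← ENNReal.sub_iInf, hinf, tsub_zero]
  -- conclusion
  have hQ : ∀ n : ℕ, (ProbabilityTheory.cond P A) {ω | n < τ ω}
      = 3 * P (A ∩ {ω | n < τ ω}) := by
    intro n
    rw [cond_apply hAmeas, hPA, inv_inv]
  have hlint : ∫⁻ ω, (τ ω : ℝ≥0∞) ∂(ProbabilityTheory.cond P A) = 3 * 2⁻¹ := by
    rw [aux_lintegral_nat _ τ hτmeas]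
    calc ∑' n : ℕ, (ProbabilityTheory.cond P A) {ω | n < τ ω}
        = ∑' n : ℕ, 3 * P (A ∩ {ω | n < τ ω}) := tsum_congr hQ
      _ = 3 * ∑' n : ℕ, P (E (n+1)) := by rw [ENNReal.tsum_mul_left]; congr 1; exact tsum_congr hkey
      _ = 3 * 2⁻¹ := by rw [htsum]
  have hnn : 0 ≤ᵐ[ProbabilityTheory.cond P A] fun ω => (τ ω : ℝ) :=
    ae_of_all _ (fun ω => by positivity)
  have hsm : AEStronglyMeasurable (fun ω => (τ ω : ℝ)) (ProbabilityTheory.cond P A) :=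
    ((measurable_from_top : Measurable (fun n : ℕ => (n : ℝ))).comp hτmeas).aestronglyMeasurable
  rw [integral_eq_lintegral_of_nonneg_ae hnn hsm]
  have : ∀ ω, ENNReal.ofReal ((τ ω : ℝ)) = (τ ω : ℝ≥0∞) := fun ω => ENNReal.ofReal_natCast _
  simp_rw [this]
  rw [hlint, ENNReal.toReal_mul, ENNReal.toReal_inv]
  norm_num
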